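/- Let K be a field, E a finite linearly ordered set, W ⊆ K^E a realization of a matroid M of rank r, and 0 ≠ φ ∈ W^∨ a linear functional on W with lift φ̃ = (φ̃_e)_{e∈E} ∈ (K^E)^∨ (so φ̃ restricts to φ on W). Let W_φ := ker φ ⊆ K^E be the elementary quotient configuration. Fix a basis w = (w^1,…,w^r) of W and for T ⊆ E with |T| = r let det α_{W,T} denote the determinant of the matrix (w^i_e)_{1≤i≤r, e∈T} with columns ordered by the linear order on E. Then, up to a nonzero square constant factor, ψ_{W_φ} = Σ_{S ⊆ E, |S| = r−1} ( Σ_{e ∉ S} (−1)^{|{s ∈ S : s < e}|} · φ̃_e · det α_{W,S∪{e}} )² · x^S. -/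

import Mathlib

open scoped BigOperators

namespace Config

variable {K : Type} [Field K] {E : Type} [Fintype E] [LinearOrder E]

/-- `w` is a (linear) basis of the configuration `W ⊆ K^E`. -/
def IsBasisOf {r : ℕ} (w : Fin r → E → K) (W : Submodule K (E → K)) : Prop :=
  LinearIndependent K w ∧ Submodule.span K (Set.range w) = W

/-- The coefficient `c_{W,B} = (det (w^i_e)_{1≤i≤r, e∈B})²`, the squared determinant of
the `r × r` submatrix of the coefficient matrix of `w` with column set `B` (the square
is independent of the chosen ordering of the columns). -/
noncomputable def cSq {r : ℕ} (w : Fin r → E → K) (B : Finset E) : K :=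
  if h : B.card = r then
    (Matrix.det (Matrix.of fun i j : Fin r =>
      w i ((Finset.equivFinOfCardEq h).symm j : E))) ^ 2
  else 0

/-- The configuration polynomial `ψ_W = ∑_B c_{W,B} · x^B` computed from the basis `w`
(the coefficient `c_{W,B}` vanishes unless `B` is a basis of the matroid `M_W`). -/
noncomputable def psi {r : ℕ} (w : Fin r → E → K) : MvPolynomial E K :=
  ∑ B ∈ Finset.univ.powersetCard r,
    MvPolynomial.C (cSq w B) * ∏ e ∈ B, MvPolynomial.X e

/-- The linear functional `v ↦ ∑_e u_e v_e` on `K^E`. -/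
noncomputable def dotFun (u : E → K) : (E → K) →ₗ[K] K :=
  ∑ e : E, u e • LinearMap.proj e

/-- The determinant `det α_{W,T}` of the `r × r` submatrix of the coefficient matrix of `w`
with columns `T`, ordered by the linear order on `E` (and `0` if `|T| ≠ r`). -/
noncomputable def detSub {r : ℕ} (w : Fin r → E → K) (T : Finset E) : K :=
  if h : T.card = r then
    Matrix.det (Matrix.of fun i j : Fin r => w i ((T.orderIsoOfFin h j : T) : E))
  else 0

/-- A down-closed finset of `Fin m` is an initial segment determined by its cardinality. -/
lemma lower_mem_iff {m : ℕ} (A : Finset (Fin m))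
    (hA : ∀ i j : Fin m, i ≤ j → j ∈ A → i ∈ A) (i : Fin m) :
    i ∈ A ↔ (i : ℕ) < A.card := by
  constructor
  · intro hi
    have h1 : Finset.Iic i ⊆ A := fun j hj => hA j i (Finset.mem_Iic.1 hj) hi
    have h2 := Finset.card_le_card h1
    rw [Fin.card_Iic] at h2
    omega
  · intro hi
    by_contra h
    have h2 : A ⊆ Finset.Iio i := fun j hj =>
      Finset.mem_Iio.2 (lt_of_not_ge fun hle => h (hA i j hle hj))
    have h3 := Finset.card_le_card h2
    rw [Fin.card_Iio] at h3
    omega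

variable {α : Type*} [LinearOrder α]

lemma orderEmb_lt_iff {S : Finset α} {m : ℕ} (hS : S.card = m) (e : α) (i : Fin m) :
    S.orderEmbOfFin hS i < e ↔ (i : ℕ) < (S.filter (fun s => s < e)).card := by
  classical
  have himg : S.filter (fun s => s < e)
      = (Finset.univ.filter (fun j : Fin m => S.orderEmbOfFin hS j < e)).image
          (S.orderEmbOfFin hS) := by
    ext x
    simp only [Finset.mem_filter, Finset.mem_image, Finset.mem_univ, true_and]
    constructor
    · rintro ⟨hxS, hxe⟩
      have : x ∈ Set.range (S.orderEmbOfFin hS) := by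
        rw [Finset.range_orderEmbOfFin]; exact hxS
      obtain ⟨j, rfl⟩ := this
      exact ⟨j, hxe, rfl⟩
    · rintro ⟨j, hj, rfl⟩
      exact ⟨S.orderEmbOfFin_mem hS j, hj⟩
  have hcard : (S.filter (fun s => s < e)).card
      = (Finset.univ.filter (fun j : Fin m => S.orderEmbOfFin hS j < e)).card := by
    rw [himg, Finset.card_image_of_injective _ (S.orderEmbOfFin hS).injective]
  rw [hcard, ← lower_mem_iff _ (fun i j hij hj => ?_) i]
  · simp
  · simp only [Finset.mem_filter, Finset.mem_univ, true_and] at hj ⊢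
    exact lt_of_le_of_lt ((S.orderEmbOfFin hS).monotone hij) hj

lemma filter_lt_card_le {S : Finset α} {m : ℕ} (hS : S.card = m) (e : α) :
    (S.filter (fun s => s < e)).card ≤ m := hS ▸ Finset.card_filter_le _ _

/-- Description of the monotone enumeration of `insert e S` in terms of that of `S`. -/
lemma orderEmbOfFin_insert [DecidableEq α] {S : Finset α} {m : ℕ} (hS : S.card = m)
    {e : α} (he : e ∉ S) (hT : (insert e S).card = m + 1) (i : Fin (m + 1)) :
    (insert e S).orderEmbOfFin hT i =
      if h : (i : ℕ) < (S.filter (fun s => s < e)).card then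
        S.orderEmbOfFin hS ⟨i, lt_of_lt_of_le h (filter_lt_card_le hS e)⟩
      else if h' : (i : ℕ) = (S.filter (fun s => s < e)).card then e
      else S.orderEmbOfFin hS ⟨(i : ℕ) - 1, by
        have h1 := filter_lt_card_le hS e
        have h2 := i.isLt
        omega⟩ := by
  set k := (S.filter (fun s => s < e)).card with hk
  have hkm : k ≤ m := filter_lt_card_le hS e
  set g : Fin (m + 1) → α := fun i =>
    if h : (i : ℕ) < k then S.orderEmbOfFin hS ⟨i, lt_of_lt_of_le h hkm⟩
    else if h' : (i : ℕ) = k then e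
    else S.orderEmbOfFin hS ⟨(i : ℕ) - 1, by have := i.isLt; omega⟩ with hg
  have hne : ∀ j : Fin m, S.orderEmbOfFin hS j ≠ e := by
    intro j hje
    exact he (hje ▸ S.orderEmbOfFin_mem hS j)
  have hmem : ∀ x, g x ∈ insert e S := by
    intro x
    rw [hg]
    dsimp only
    split_ifs
    · exact Finset.mem_insert_of_mem (S.orderEmbOfFin_mem hS _)
    · exact Finset.mem_insert_self _ _
    · exact Finset.mem_insert_of_mem (S.orderEmbOfFin_mem hS _)
  have hmono : StrictMono g := by
    intro i j hij
    have hij' : (i : ℕ) < (j : ℕ) := hij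
    rw [hg]; dsimp only
    rcases lt_trichotomy (i : ℕ) k with hi | hi | hi
    · rw [dif_pos hi]
      rcases lt_trichotomy (j : ℕ) k with hj | hj | hj
      · rw [dif_pos hj]
        exact (S.orderEmbOfFin hS).strictMono (by simpa using hij')
      · rw [dif_neg (by omega), dif_pos hj]
        exact (orderEmb_lt_iff hS e _).2 hi
      · rw [dif_neg (by omega), dif_neg (by omega)]
        exact (S.orderEmbOfFin hS).strictMono (by simp only [Fin.mk_lt_mk]; omega)
    · rw [dif_neg (by omega), dif_pos hi]
      rw [dif_neg (by omega), dif_neg (by omega)]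
      have h2 : ¬ (S.orderEmbOfFin hS ⟨(j : ℕ) - 1, by have := j.isLt; omega⟩ < e) := by
        rw [orderEmb_lt_iff hS e]
        simp only [not_lt]
        omega
      exact lt_of_le_of_ne (le_of_not_gt h2) (Ne.symm (hne _))
    · rw [dif_neg (by omega), dif_neg (by omega), dif_neg (by omega), dif_neg (by omega)]
      exact (S.orderEmbOfFin hS).strictMono (by simp only [Fin.mk_lt_mk]; omega)
  have key := Finset.orderEmbOfFin_unique hT hmem hmono
  rw [← key]

/-- The cycle `(k k+1 ... m)` on `Fin (m+1)` as a permutation. -/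
def sigmaPerm (m k : ℕ) (hk : k ≤ m) : Equiv.Perm (Fin (m + 1)) :=
  Fin.revPerm * (Fin.cycleRange (⟨m - k, by omega⟩ : Fin (m + 1)))⁻¹ * Fin.revPerm

lemma sigmaPerm_sign (m k : ℕ) (hk : k ≤ m) :
    Equiv.Perm.sign (sigmaPerm m k hk) = (-1) ^ (m - k) := by
  unfold sigmaPerm
  rw [Equiv.Perm.sign_mul, Equiv.Perm.sign_mul, Equiv.Perm.sign_inv, Fin.sign_cycleRange]
  have : (Equiv.Perm.sign (Fin.revPerm : Equiv.Perm (Fin (m + 1)))) *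
      (Equiv.Perm.sign (Fin.revPerm : Equiv.Perm (Fin (m + 1)))) = 1 := by
    rw [← Equiv.Perm.sign_mul]
    have : (Fin.revPerm : Equiv.Perm (Fin (m + 1))) * Fin.revPerm = 1 := by
      ext x
      simp
    rw [this, Equiv.Perm.sign_one]
  calc Equiv.Perm.sign Fin.revPerm * (-1 : ℤˣ) ^ ((⟨m - k, by omega⟩ : Fin (m+1)) : ℕ) *
        Equiv.Perm.sign Fin.revPerm
      = (Equiv.Perm.sign (Fin.revPerm : Equiv.Perm (Fin (m + 1)))) *
        (Equiv.Perm.sign (Fin.revPerm : Equiv.Perm (Fin (m + 1)))) * (-1) ^ (m - k) := by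
        rw [mul_right_comm]
    _ = (-1) ^ (m - k) := by rw [this, one_mul]

lemma sigmaPerm_apply_of_rev {m k : ℕ} (hk : k ≤ m) (x y : Fin (m + 1))
    (hxy : Fin.cycleRange (⟨m - k, by omega⟩ : Fin (m + 1)) y.rev = x.rev) :
    sigmaPerm m k hk x = y := by
  unfold sigmaPerm
  have h1 : (Fin.cycleRange (⟨m - k, by omega⟩ : Fin (m + 1)))⁻¹ x.rev = y.rev := by
    rw [← hxy]
    simp
  simp only [Equiv.Perm.coe_mul, Function.comp_apply, Fin.revPerm_apply]
  rw [h1]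
  simp

lemma sigmaPerm_apply_last {m k : ℕ} (hk : k ≤ m) :
    sigmaPerm m k hk (Fin.last m) = ⟨k, by omega⟩ := by
  apply sigmaPerm_apply_of_rev
  have h1 : (⟨k, by omega⟩ : Fin (m + 1)).rev = ⟨m - k, by omega⟩ := by
    ext
    simp only [Fin.val_rev]
    omega
  have h2 : (Fin.last m).rev = 0 := by
    ext
    simp only [Fin.val_rev, Fin.val_last, Fin.val_zero]
    omega
  rw [h1, h2, Fin.cycleRange_self]

lemma sigmaPerm_apply_lt {m k : ℕ} (hk : k ≤ m) (j : Fin m) (hj : (j : ℕ) < k) :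
    sigmaPerm m k hk j.castSucc = j.castSucc := by
  apply sigmaPerm_apply_of_rev
  apply Fin.cycleRange_of_gt
  rw [Fin.lt_iff_val_lt_val]
  simp only [Fin.val_rev, Fin.coe_castSucc]
  omega

lemma sigmaPerm_apply_ge {m k : ℕ} (hk : k ≤ m) (j : Fin m) (hj : k ≤ (j : ℕ)) :
    sigmaPerm m k hk j.castSucc = j.succ := by
  apply sigmaPerm_apply_of_rev
  have hlt : (j.succ.rev : Fin (m + 1)) < ⟨m - k, by omega⟩ := by
    rw [Fin.lt_iff_val_lt_val]
    simp only [Fin.val_rev, Fin.val_succ]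
    have := j.isLt
    omega
  have := Fin.coe_cycleRange_of_lt hlt
  ext
  rw [this]
  simp only [Fin.val_rev, Fin.val_succ, Fin.coe_castSucc]
  have := j.isLt
  omega

lemma det_updateColumn_finset_sum {n : Type*} [DecidableEq n] [Fintype n] {R : Type*}
    [CommRing R] {ι : Type*} (A : Matrix n n R) (j : n) (s : Finset ι) (u : ι → n → R) :
    (A.updateCol j (fun i => ∑ t ∈ s, u t i)).det
      = ∑ t ∈ s, (A.updateCol j (u t)).det := by
  classical
  induction s using Finset.induction_on with
  | empty =>
      rw [Finset.sum_empty]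
      apply Matrix.det_eq_zero_of_column_eq_zero j
      intro i
      simp [Matrix.updateCol_apply]
  | @insert a s ha ih =>
      rw [Finset.sum_insert ha]
      have : (fun i => ∑ t ∈ insert a s, u t i)
          = fun i => u a i + ∑ t ∈ s, u t i := by
        funext i
        rw [Finset.sum_insert ha]
      rw [this]
      rw [show (fun i => u a i + ∑ t ∈ s, u t i)
          = (u a + fun i => ∑ t ∈ s, u t i) from rfl]
      rw [Matrix.det_updateCol_add, ih]


variable {K : Type} [Field K] {E : Type} [Fintype E] [LinearOrder E]

lemma neg_one_pow_sub (m k : ℕ) (hk : k ≤ m) :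
    (-1 : K) ^ (m - k) = (-1) ^ m * (-1) ^ k := by
  have h1 : (-1 : K) ^ k * (-1) ^ k = 1 := by
    rw [← pow_add, ← two_mul, pow_mul]
    norm_num
  calc (-1 : K) ^ (m - k) = (-1) ^ (m - k) * ((-1) ^ k * (-1) ^ k) := by rw [h1, mul_one]
    _ = ((-1) ^ (m - k) * (-1) ^ k) * (-1) ^ k := by ring
    _ = (-1) ^ m * (-1) ^ k := by rw [← pow_add, Nat.sub_add_cancel hk]

/-- Laplace expansion of the determinant of the matrix whose first `m` columns are the columns
of `w` indexed by the sorted elements of `S`, and whose last column is `∑ e, φt e * w · e`. -/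
lemma det_snoc_sum {m : ℕ} (w : Fin (m + 1) → E → K) (φt : E → K) (S : Finset E)
    (hS : S.card = m) :
    (Matrix.of fun i j : Fin (m + 1) =>
        Fin.snoc (fun j' : Fin m => w i (S.orderEmbOfFin hS j')) (∑ e : E, φt e * w i e) j).det
      = (-1 : K) ^ m * ∑ e ∈ Sᶜ,
          (-1 : K) ^ (S.filter (fun s => s < e)).card * φt e * detSub w (insert e S) := by
  classical
  set B : Matrix (Fin (m + 1)) (Fin (m + 1)) K := Matrix.of fun i j =>
    (Fin.snoc (fun j' : Fin m => w i (S.orderEmbOfFin hS j')) (0 : K) : Fin (m+1) → K) j with hB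
  have hA : (Matrix.of fun i j : Fin (m + 1) =>
        Fin.snoc (fun j' : Fin m => w i (S.orderEmbOfFin hS j')) (∑ e : E, φt e * w i e) j)
      = B.updateCol (Fin.last m) (fun i => ∑ e : E, φt e * w i e) := by
    ext i j
    induction j using Fin.lastCases with
    | last => simp [Matrix.updateCol_apply, hB]
    | cast j' => simp [Matrix.updateCol_apply, hB, (Fin.castSucc_lt_last j').ne]
  rw [hA, det_updateColumn_finset_sum B (Fin.last m) Finset.univ
    (fun e i => φt e * w i e)]
  have hsmul : ∀ e : E, (B.updateCol (Fin.last m) (fun i => φt e * w i e)).det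
      = φt e * (B.updateCol (Fin.last m) (fun i => w i e)).det := by
    intro e
    rw [show (fun i => φt e * w i e) = φt e • (fun i => w i e) from rfl,
      Matrix.det_updateCol_smul]
  have hsplit := Finset.sum_add_sum_compl S
    (fun e => (B.updateCol (Fin.last m) (fun i => φt e * w i e)).det)
  rw [← hsplit]
  have hzero : ∀ e ∈ S, (B.updateCol (Fin.last m) (fun i => φt e * w i e)).det = 0 := by
    intro e he
    rw [hsmul e]
    have : e ∈ Set.range (S.orderEmbOfFin hS) := by rw [Finset.range_orderEmbOfFin]; exact he
    obtain ⟨j', hj'⟩ := this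
    have hdet : (B.updateCol (Fin.last m) (fun i => w i e)).det = 0 := by
      apply Matrix.det_zero_of_column_eq (Fin.castSucc_lt_last j').ne
      intro i
      rw [Matrix.updateCol_apply, Matrix.updateCol_apply,
        if_neg (Fin.castSucc_lt_last j').ne, if_pos rfl]
      simp [hB, hj']
    rw [hdet, mul_zero]
  rw [Finset.sum_eq_zero hzero, zero_add, Finset.mul_sum]
  apply Finset.sum_congr rfl
  intro e he
  have heS : e ∉ S := by simpa using he
  have hT : (insert e S).card = m + 1 := by rw [Finset.card_insert_of_notMem heS, hS]
  set k := (S.filter (fun s => s < e)).card with hk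
  have hkm : k ≤ m := filter_lt_card_le hS e
  set D : Matrix (Fin (m + 1)) (Fin (m + 1)) K := Matrix.of fun i j =>
    w i ((insert e S).orderEmbOfFin hT j) with hD
  have hdetSub : detSub w (insert e S) = D.det := by
    rw [detSub, dif_pos hT]
    congr 1
  have hCeq : B.updateCol (Fin.last m) (fun i => w i e)
      = D.submatrix id (sigmaPerm m k hkm) := by
    ext i j
    rw [Matrix.submatrix_apply, id]
    induction j using Fin.lastCases with
    | last =>
      rw [Matrix.updateCol_apply, if_pos rfl, sigmaPerm_apply_last hkm, hD]
      simp only [Matrix.of_apply]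
      rw [orderEmbOfFin_insert hS heS hT ⟨k, by omega⟩]
      rw [dif_neg (by simp [hk]), dif_pos rfl]
    | cast j' =>
      rw [Matrix.updateCol_apply, if_neg (Fin.castSucc_lt_last j').ne]
      by_cases hjk : (j' : ℕ) < k
      · rw [sigmaPerm_apply_lt hkm j' hjk, hB, hD]
        simp only [Matrix.of_apply, Fin.snoc_castSucc]
        rw [orderEmbOfFin_insert hS heS hT j'.castSucc]
        rw [dif_pos (by simpa using hjk)]
        simp
      · rw [sigmaPerm_apply_ge hkm j' (le_of_not_gt hjk), hB, hD]
        simp only [Matrix.of_apply, Fin.snoc_castSucc]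
        rw [orderEmbOfFin_insert hS heS hT j'.succ]
        rw [dif_neg (by simp only [Fin.val_succ]; omega),
          dif_neg (by simp only [Fin.val_succ]; omega)]
        congr 1
  have hsign : ((Equiv.Perm.sign (sigmaPerm m k hkm) : ℤ) : K) = (-1 : K) ^ (m - k) := by
    rw [sigmaPerm_sign m k hkm]
    push_cast
    rfl
  rw [hsmul e, hCeq, Matrix.det_permute' (sigmaPerm m k hkm) D, ← hdetSub]
  rw [hsign, neg_one_pow_sub m k hkm]
  ring

lemma dotFun_apply (u v : E → K) : dotFun u v = ∑ e, u e * v e := by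
  simp [dotFun]

lemma sq_cast_sign {ι : Type*} [DecidableEq ι] [Fintype ι] (ρ : Equiv.Perm ι) :
    ((Equiv.Perm.sign ρ : ℤ) : K) ^ 2 = 1 := by
  rcases Int.units_eq_one_or (Equiv.Perm.sign ρ) with h | h <;> rw [h] <;> norm_num

/-- **Theorem (Configuration polynomials of elementary quotients).**
Let `W ⊆ K^E` realize a matroid of rank `r`, let `φ ≠ 0` be a functional on `W` with
lift `φ̃ ∈ (K^E)^∨`, and let `W_φ = ker φ`.  Then, up to a nonzero square constant factor,
`ψ_{W_φ} = ∑_{|S| = r−1} (∑_{e ∉ S} ±φ̃_e · det α_{W,S∪{e}})² · x^S`, with the sign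
`(−1)^{|{s ∈ S : s < e}|}` determined by Laplace expansion. -/
theorem psi_elementary_quotient
    (W : Submodule K (E → K)) {r : ℕ} (w : Fin r → E → K) (hw : IsBasisOf w W)
    (φt : E → K) (hφ : ∃ v ∈ W, dotFun φt v ≠ 0)
    (wq : Fin (r - 1) → E → K)
    (hwq : IsBasisOf wq (W ⊓ LinearMap.ker (dotFun φt))) :
    ∃ c : K, c ≠ 0 ∧
      psi wq = MvPolynomial.C (c ^ 2) *
        ∑ S ∈ Finset.univ.powersetCard (r - 1),
          MvPolynomial.C
            ((∑ e ∈ Sᶜ,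
              (-1 : K) ^ (S.filter (fun s => s < e)).card * φt e *
                detSub w (insert e S)) ^ 2) *
          ∏ e ∈ S, MvPolynomial.X e := by
  obtain ⟨hwli, hwspan⟩ := hw
  obtain ⟨v0, hv0W, hv0φ⟩ := hφ
  obtain _ | m := r
  · exfalso
    have hWbot : W = ⊥ := by
      rw [← hwspan]
      have : Set.range w = ∅ := by
        rw [Set.range_eq_empty_iff]
        exact Fin.isEmpty'
      rw [this, Submodule.span_empty]
    rw [hWbot, Submodule.mem_bot] at hv0W
    rw [hv0W, map_zero] at hv0φ
    exact hv0φ rfl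
  obtain ⟨hqli, hqspan⟩ := hwq
  simp only [Nat.add_sub_cancel]
  set u : Fin (m + 1) → E → K := Fin.cons v0 wq with hu
  have hwq_mem : ∀ i : Fin m, wq i ∈ W ⊓ LinearMap.ker (dotFun φt) := by
    intro i
    rw [← hqspan]
    exact Submodule.subset_span ⟨i, rfl⟩
  have hv0_not : v0 ∉ Submodule.span K (Set.range wq) := by
    rw [hqspan]
    rintro ⟨-, hker⟩
    exact hv0φ hker
  have hspan_u : Submodule.span K (Set.range u) = W := by
    apply le_antisymm
    · rw [Submodule.span_le]
      rintro x ⟨i, rfl⟩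
      induction i using Fin.cases with
      | zero => rw [hu]; simpa using hv0W
      | succ i' =>
        rw [hu]
        simpa using (hwq_mem i').1
    · intro x hxW
      set a := dotFun φt x / dotFun φt v0 with ha
      have hy : x - a • v0 ∈ Submodule.span K (Set.range wq) := by
        rw [hqspan]
        refine Submodule.mem_inf.2 ⟨sub_mem hxW (Submodule.smul_mem _ _ hv0W), ?_⟩
        rw [LinearMap.mem_ker, map_sub, map_smul, smul_eq_mul, ha,
          div_mul_cancel₀ _ hv0φ, sub_self]
      have h1 : v0 ∈ Submodule.span K (Set.range u) := by
        apply Submodule.subset_span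
        exact ⟨0, by rw [hu, Fin.cons_zero]⟩
      have h2 : Submodule.span K (Set.range wq) ≤ Submodule.span K (Set.range u) := by
        apply Submodule.span_mono
        rintro y ⟨i, rfl⟩
        exact ⟨i.succ, by rw [hu, Fin.cons_succ]⟩
      have hx : x = a • v0 + (x - a • v0) := by abel
      rw [hx]
      exact add_mem (Submodule.smul_mem _ _ h1) (h2 hy)
  have hPex : ∀ i : Fin (m + 1), ∃ c : Fin (m + 1) → K, ∑ j, c j • u j = w i := by
    intro i
    have : w i ∈ Submodule.span K (Set.range u) := by
      rw [hspan_u, ← hwspan]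
      exact Submodule.subset_span ⟨i, rfl⟩
    exact (Submodule.mem_span_range_iff_exists_fun K).1 this
  choose P hP using hPex
  have hQex : ∀ j : Fin (m + 1), ∃ c : Fin (m + 1) → K, ∑ t, c t • w t = u j := by
    intro j
    have : u j ∈ Submodule.span K (Set.range w) := by
      rw [hwspan, ← hspan_u]
      exact Submodule.subset_span ⟨j, rfl⟩
    exact (Submodule.mem_span_range_iff_exists_fun K).1 this
  choose Q hQ using hQex
  set Pm : Matrix (Fin (m + 1)) (Fin (m + 1)) K := Matrix.of P with hPm
  have hPQ : Pm * Matrix.of Q = 1 := by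
    ext i t
    have hsum : ∑ tt, (∑ j, P i j * Q j tt) • w tt = w i := by
      calc ∑ tt, (∑ j, P i j * Q j tt) • w tt
          = ∑ tt, ∑ j, (P i j * Q j tt) • w tt := by
            apply Finset.sum_congr rfl
            intro tt _
            rw [Finset.sum_smul]
        _ = ∑ j, ∑ tt, (P i j * Q j tt) • w tt := Finset.sum_comm
        _ = ∑ j, P i j • (∑ tt, Q j tt • w tt) := by
            apply Finset.sum_congr rfl
            intro j _
            rw [Finset.smul_sum]
            apply Finset.sum_congr rfl
            intro tt _
            rw [smul_smul]
        _ = ∑ j, P i j • u j := by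
            apply Finset.sum_congr rfl
            intro j _
            rw [hQ j]
        _ = w i := hP i
    have hzero : ∑ tt, ((∑ j, P i j * Q j tt) - (if tt = i then 1 else 0)) • w tt = 0 := by
      simp only [sub_smul, Finset.sum_sub_distrib, hsum, ite_smul, one_smul, zero_smul]
      rw [Finset.sum_ite_eq' Finset.univ i w]
      simp
    have := Fintype.linearIndependent_iff.1 hwli _ hzero t
    have hentry : (∑ j, P i j * Q j t) = if t = i then 1 else 0 := by
      have h' := sub_eq_zero.1 this
      exact h'
    simp only [Matrix.mul_apply, Matrix.one_apply, Matrix.of_apply, hPm]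
    rw [hentry]
    simp [eq_comm]
  have hdetP : Pm.det ≠ 0 := by
    intro h0
    have := Matrix.det_mul Pm (Matrix.of Q)
    rw [hPQ, Matrix.det_one, h0, zero_mul] at this
    exact one_ne_zero this
  set φv0 := dotFun φt v0 with hφv0
  refine ⟨(Pm.det * φv0)⁻¹, inv_ne_zero (mul_ne_zero hdetP hv0φ), ?_⟩
  have hkey : ∀ S : Finset E, S.card = m →
      cSq (r := m) wq S = ((Pm.det * φv0)⁻¹) ^ 2 *
        (∑ e ∈ Sᶜ, (-1 : K) ^ (S.filter (fun s => s < e)).card * φt e *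
          detSub w (insert e S)) ^ 2 := by
    intro S hS
    set LS := ∑ e ∈ Sᶜ, (-1 : K) ^ (S.filter (fun s => s < e)).card * φt e *
      detSub w (insert e S) with hLS
    set MS : Matrix (Fin m) (Fin m) K :=
      Matrix.of fun i j => wq i (S.orderEmbOfFin hS j) with hMS
    set AS : Matrix (Fin (m + 1)) (Fin (m + 1)) K := Matrix.of fun i j =>
      (Fin.snoc (fun j' : Fin m => w i (S.orderEmbOfFin hS j'))
        (∑ e : E, φt e * w i e) : Fin (m + 1) → K) j with hAS
    set AS' : Matrix (Fin (m + 1)) (Fin (m + 1)) K := Matrix.of fun i j =>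
      (Fin.snoc (fun j' : Fin m => u i (S.orderEmbOfFin hS j'))
        (∑ e : E, φt e * u i e) : Fin (m + 1) → K) j with hAS'
    have hPu : ∀ i (e : E), ∑ t, P i t * u t e = w i e := by
      intro i e
      have := congrFun (hP i) e
      simpa using this
    have hfact : AS = Pm * AS' := by
      ext i j
      rw [Matrix.mul_apply]
      induction j using Fin.lastCases with
      | last =>
        simp only [hAS, hAS', Matrix.of_apply, Fin.snoc_last, hPm]
        symm
        have hstep : ∀ x : Fin (m + 1),
            P i x * ∑ e : E, φt e * u x e = ∑ e : E, φt e * (P i x * u x e) := by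
          intro x
          rw [Finset.mul_sum]
          apply Finset.sum_congr rfl
          intro e _
          ring
        rw [Finset.sum_congr rfl (fun x _ => hstep x), Finset.sum_comm]
        apply Finset.sum_congr rfl
        intro e _
        have : ∑ x : Fin (m + 1), φt e * (P i x * u x e)
            = φt e * ∑ x : Fin (m + 1), P i x * u x e := by
          rw [Finset.mul_sum]
        rw [this, hPu i e]
      | cast j' =>
        simp only [hAS, hAS', Matrix.of_apply, Fin.snoc_castSucc, hPm]
        exact (hPu i _).symm
    have hdetAS : AS.det = (-1 : K) ^ m * LS := det_snoc_sum w φt S hS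
    have hAS'last : ∀ t : Fin m, (∑ e : E, φt e * u t.succ e) = 0 := by
      intro t
      have h2 : (dotFun φt) (wq t) = 0 := (Submodule.mem_inf.1 (hwq_mem t)).2
      rw [dotFun_apply] at h2
      rw [hu]
      simpa using h2
    have hdetAS' : AS'.det = (-1 : K) ^ m * (φv0 * MS.det) := by
      rw [Matrix.det_succ_column AS' (Fin.last m), Fin.sum_univ_succ]
      have hzero : ∀ t : Fin m,
          (-1 : K) ^ ((t.succ : ℕ) + (Fin.last m : ℕ)) * AS' t.succ (Fin.last m) *
            (AS'.submatrix t.succ.succAbove (Fin.last m).succAbove).det = 0 := by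
        intro t
        have : AS' t.succ (Fin.last m) = 0 := by
          simp only [hAS', Matrix.of_apply, Fin.snoc_last]
          exact hAS'last t
        rw [this, mul_zero, zero_mul]
      rw [Finset.sum_eq_zero (fun t _ => hzero t), add_zero]
      have h0last : AS' 0 (Fin.last m) = φv0 := by
        simp only [hAS', Matrix.of_apply, Fin.snoc_last, hu, Fin.cons_zero]
        rw [hφv0, dotFun_apply]
      have hsub : AS'.submatrix (0 : Fin (m + 1)).succAbove (Fin.last m).succAbove = MS := by
        ext a b
        simp only [Matrix.submatrix_apply, Fin.succAbove_zero, Fin.succAbove_last,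
          hAS', hMS, Matrix.of_apply, Fin.snoc_castSucc, hu, Fin.cons_succ]
      rw [h0last, hsub]
      simp only [Fin.val_zero, Fin.val_last, zero_add]
      ring
    have hLSeq : (-1 : K) ^ m * LS = (-1 : K) ^ m * (Pm.det * φv0 * MS.det) := by
      rw [← hdetAS, hfact, Matrix.det_mul, hdetAS']
      ring
    have hLS' : LS = Pm.det * φv0 * MS.det :=
      mul_left_cancel₀ (pow_ne_zero m (by norm_num : (-1 : K) ≠ 0)) hLSeq
    have hcSq : cSq (r := m) wq S = MS.det ^ 2 := by
      rw [cSq, dif_pos hS]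
      set ρ : Fin m ≃ Fin m :=
        (S.equivFinOfCardEq hS).symm.trans (S.orderIsoOfFin hS).toEquiv.symm with hρ
      have hM'' : (Matrix.of fun i j : Fin m =>
          wq i ((Finset.equivFinOfCardEq hS).symm j : E)) = MS.submatrix id ρ := by
        ext i j
        simp only [Matrix.submatrix_apply, id, hMS, Matrix.of_apply, hρ, Equiv.trans_apply]
        rw [← Finset.coe_orderIsoOfFin_apply]
        simp
      rw [hM'', Matrix.det_permute' ρ MS, mul_pow, sq_cast_sign, one_mul]
    rw [hcSq, hLS']
    field_simp
  rw [psi, Finset.mul_sum]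
  apply Finset.sum_congr rfl
  intro S hSmem
  have hS : S.card = m := by
    have := Finset.mem_powersetCard.1 hSmem
    omega
  rw [hkey S hS, ← mul_assoc, ← MvPolynomial.C_mul]


end Config
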